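/- Let ρ be a density matrix on a bipartite Hilbert space H₁ ⊗ H₂, and define T(ρ) = (1/2)·min over separable states χ of the trace norm ‖ρ − χ‖₁, and BSA(ρ) = max{λ ∈ [0,1] : ρ = λσ + (1−λ)τ for some separable state σ and state τ}. Then BSA(ρ) ≤ 1 − T(ρ). -/

import Mathlib

open Matrix BigOperators Kronecker
open scoped ComplexOrder

noncomputable section

/-- A density matrix: positive semidefinite with trace one. -/
def IsState {ι : Type*} [Fintype ι] [DecidableEq ι]
    (ρ : Matrix ι ι ℂ) : Prop :=
  ρ.PosSemidef ∧ ρ.trace = 1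

/-- A bipartite state on `ℂ^n ⊗ ℂ^m` is separable if it is a convex combination of
product states. -/
def IsSepState {n m : ℕ} (ρ : Matrix (Fin n × Fin m) (Fin n × Fin m) ℂ) : Prop :=
  ∃ (N : ℕ) (p : Fin N → ℝ) (σ : Fin N → Matrix (Fin n) (Fin n) ℂ)
    (τ : Fin N → Matrix (Fin m) (Fin m) ℂ),
    (∀ i, 0 ≤ p i) ∧ (∑ i, p i = 1) ∧
    (∀ i, IsState (σ i)) ∧ (∀ i, IsState (τ i)) ∧
    ρ = ∑ i, (p i : ℂ) • (σ i ⊗ₖ τ i)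

/-- The trace norm of a matrix: the trace of `√(AᴴA)`. -/
def traceNorm {ι : Type*} [Fintype ι] [DecidableEq ι] (A : Matrix ι ι ℂ) : ℝ :=
  (((Matrix.posSemidef_conjTranspose_mul_self A).1.eigenvectorUnitary.1 *
      diagonal (((↑) : ℝ → ℂ) ∘ (√·) ∘ (Matrix.posSemidef_conjTranspose_mul_self A).1.eigenvalues) *
      (star (Matrix.posSemidef_conjTranspose_mul_self A).1.eigenvectorUnitary : Matrix ι ι ℂ)).trace).re

/-- Half the minimal trace distance from `ρ` to a separable state. -/
def sepDist {n m : ℕ} (ρ : Matrix (Fin n × Fin m) (Fin n × Fin m) ℂ) : ℝ :=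
  (1 / 2) * sInf {t | ∃ χ, IsState χ ∧ IsSepState χ ∧ t = traceNorm (ρ - χ)}

/-- The best separable approximation of `ρ`: the maximal weight of a separable state
in a convex decomposition of `ρ`. -/
def BSA {n m : ℕ} (ρ : Matrix (Fin n × Fin m) (Fin n × Fin m) ℂ) : ℝ :=
  sSup {l : ℝ | l ∈ Set.Icc (0 : ℝ) 1 ∧ ∃ σ τ, IsState σ ∧ IsSepState σ ∧ IsState τ ∧
    ρ = (l : ℂ) • σ + ((1 - l : ℝ) : ℂ) • τ}

section Helpers

set_option linter.unusedSectionVars false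

variable {ι : Type*} [Fintype ι] [DecidableEq ι]


lemma psd_smul_real {A : Matrix ι ι ℂ} (hA : A.PosSemidef) {c : ℝ} (hc : 0 ≤ c) :
    ((c : ℂ) • A).PosSemidef := by
  exact hA.smul (by exact_mod_cast hc : (0 : ℂ) ≤ c)

lemma psd_diag_nonneg {A : Matrix ι ι ℂ} (hA : A.PosSemidef) (i : ι) :
    0 ≤ A i i := by
  exact hA.diag_nonneg

lemma psd_trace_re_nonneg {A : Matrix ι ι ℂ} (hA : A.PosSemidef) :
    0 ≤ A.trace.re := by
  rw [Matrix.trace, Complex.re_sum]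
  exact Finset.sum_nonneg fun i _ => (Complex.le_def.mp (psd_diag_nonneg hA i)).1

lemma traceNorm_eq_cfc (A : Matrix ι ι ℂ) :
    traceNorm A = (cfc Real.sqrt (Aᴴ * A)).trace.re := by
  rw [(Matrix.posSemidef_conjTranspose_mul_self A).1.cfc_eq, IsHermitian.cfc,
    Unitary.conjStarAlgAut_apply]
  rfl

lemma trace_herm_cfc {H : Matrix ι ι ℂ} (hH : H.IsHermitian) (f : ℝ → ℝ) :
    (cfc f H).trace.re = ∑ i, f (hH.eigenvalues i) := by
  rw [hH.cfc_eq, IsHermitian.cfc, Unitary.conjStarAlgAut_apply, Matrix.trace_mul_cycle,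
    Unitary.coe_star_mul_self, Matrix.one_mul, Matrix.trace_diagonal, Complex.re_sum]
  simp

lemma traceNorm_nonneg (A : Matrix ι ι ℂ) : 0 ≤ traceNorm A := by
  rw [traceNorm_eq_cfc, trace_herm_cfc (Matrix.posSemidef_conjTranspose_mul_self A).1]
  exact Finset.sum_nonneg fun i _ => Real.sqrt_nonneg _

lemma traceNorm_eq_sum_abs {H : Matrix ι ι ℂ} (hH : H.IsHermitian) :
    traceNorm H = ∑ i, |hH.eigenvalues i| := by
  rw [traceNorm_eq_cfc, hH.eq, ← pow_two,
    ← cfc_comp_pow Real.sqrt 2 H (ha := hH.isSelfAdjoint)]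
  have hf : (fun x : ℝ => Real.sqrt (x ^ 2)) = fun x => |x| :=
    funext fun x => Real.sqrt_sq_eq_abs x
  rw [hf, trace_herm_cfc hH]

lemma traceNorm_smul_real (c : ℝ) (hc : 0 ≤ c) (A : Matrix ι ι ℂ) :
    traceNorm ((c : ℂ) • A) = c * traceNorm A := by
  have h : ((c : ℂ) • A)ᴴ * ((c : ℂ) • A) = (c ^ 2 : ℝ) • (Aᴴ * A) := by
    ext i j
    simp [Matrix.mul_apply, Finset.mul_sum, Complex.conj_ofReal]
    refine Finset.sum_congr rfl fun k _ => ?_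
    ring
  rw [traceNorm_eq_cfc, traceNorm_eq_cfc, h,
    ← cfc_comp_const_mul (c ^ 2) Real.sqrt (Aᴴ * A)
      (ha := (Matrix.posSemidef_conjTranspose_mul_self A).1.isSelfAdjoint)]
  have hf : (fun x : ℝ => Real.sqrt (c ^ 2 * x)) = fun x => c * Real.sqrt x :=
    funext fun x => by rw [Real.sqrt_mul (sq_nonneg c), Real.sqrt_sq hc]
  rw [hf, cfc_const_mul c Real.sqrt, Matrix.trace_smul, Complex.smul_re, smul_eq_mul]

lemma isState_trace_re {A : Matrix ι ι ℂ} (h : IsState A) : A.trace.re = 1 := by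
  rw [h.2]; simp

lemma re_trace_conj_eq {A : Matrix ι ι ℂ} (U : Matrix ι ι ℂ) (hU2 : U * star U = 1) :
    (star U * A * U).trace = A.trace := by
  rw [Matrix.trace_mul_cycle, hU2, Matrix.one_mul]

lemma traceNorm_state_sub_le {σ τ : Matrix ι ι ℂ} (hσ : IsState σ) (hτ : IsState τ) :
    traceNorm (τ - σ) ≤ 2 := by
  have hH : (τ - σ).IsHermitian := hτ.1.1.sub hσ.1.1
  rw [traceNorm_eq_sum_abs hH]
  set U : Matrix ι ι ℂ := (hH.eigenvectorUnitary : Matrix ι ι ℂ) with hUdef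
  have hU2 : U * star U = 1 := Matrix.mem_unitaryGroup_iff.mp hH.eigenvectorUnitary.2
  have hτ' : (star U * τ * U).PosSemidef := by
    have := hτ.1.conjTranspose_mul_mul_same (B := U)
    simpa [Matrix.star_eq_conjTranspose] using this
  have hσ' : (star U * σ * U).PosSemidef := by
    have := hσ.1.conjTranspose_mul_mul_same (B := U)
    simpa [Matrix.star_eq_conjTranspose] using this
  have hdiag : star U * (τ - σ) * U = diagonal (Complex.ofReal ∘ hH.eigenvalues) :=
    by
      have := hH.conjStarAlgAut_star_eigenvectorUnitary
      rw [Unitary.conjStarAlgAut_apply] at this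
      simpa [hUdef] using this
  have hsplit : star U * (τ - σ) * U = star U * τ * U - star U * σ * U := by
    rw [Matrix.mul_sub, Matrix.sub_mul]
  have heig : ∀ i, hH.eigenvalues i =
      ((star U * τ * U) i i).re - ((star U * σ * U) i i).re := by
    intro i
    have := congrArg (fun M : Matrix ι ι ℂ => (M i i).re) (hsplit.symm.trans hdiag)
    simpa [Matrix.diagonal_apply_eq, Matrix.sub_apply] using this.symm
  have hτtr : ∑ i, ((star U * τ * U) i i).re = 1 := by
    have := re_trace_conj_eq (A := τ) U hU2
    have h2 : ((star U * τ * U).trace).re = 1 := by rw [this, isState_trace_re hτ]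
    rwa [Matrix.trace, Complex.re_sum] at h2
  have hσtr : ∑ i, ((star U * σ * U) i i).re = 1 := by
    have := re_trace_conj_eq (A := σ) U hU2
    have h2 : ((star U * σ * U).trace).re = 1 := by rw [this, isState_trace_re hσ]
    rwa [Matrix.trace, Complex.re_sum] at h2
  calc ∑ i, |hH.eigenvalues i|
      ≤ ∑ i, (((star U * τ * U) i i).re + ((star U * σ * U) i i).re) := by
        apply Finset.sum_le_sum
        intro i _
        rw [heig i]
        have ha := (Complex.le_def.mp (psd_diag_nonneg hτ' i)).1
        have hb := (Complex.le_def.mp (psd_diag_nonneg hσ' i)).1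
        calc |((star U * τ * U) i i).re - ((star U * σ * U) i i).re|
            ≤ |((star U * τ * U) i i).re| + |((star U * σ * U) i i).re| := abs_sub _ _
          _ = _ := by rw [abs_of_nonneg ha, abs_of_nonneg hb]
    _ = 2 := by rw [Finset.sum_add_distrib, hτtr, hσtr]; norm_num


end Helpers

lemma exists_sepState {n m : ℕ} (hn : 1 ≤ n) (hm : 1 ≤ m) :
    ∃ χ : Matrix (Fin n × Fin m) (Fin n × Fin m) ℂ, IsState χ ∧ IsSepState χ := by
  set σ0 : Matrix (Fin n) (Fin n) ℂ := (((n : ℝ)⁻¹ : ℝ) : ℂ) • 1 with hσ0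
  set τ0 : Matrix (Fin m) (Fin m) ℂ := (((m : ℝ)⁻¹ : ℝ) : ℂ) • 1 with hτ0
  have hn0 : (n : ℝ) ≠ 0 := by positivity
  have hm0 : (m : ℝ) ≠ 0 := by positivity
  have hσ0s : IsState σ0 := by
    refine ⟨psd_smul_real Matrix.PosSemidef.one (by positivity), ?_⟩
    rw [hσ0, Matrix.trace_smul, Matrix.trace_one, smul_eq_mul]
    push_cast
    field_simp
    simp
  have hτ0s : IsState τ0 := by
    refine ⟨psd_smul_real Matrix.PosSemidef.one (by positivity), ?_⟩
    rw [hτ0, Matrix.trace_smul, Matrix.trace_one, smul_eq_mul]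
    push_cast
    field_simp
    simp
  refine ⟨σ0 ⊗ₖ τ0, ⟨?_, ?_⟩, 1, (fun _ => 1), (fun _ => σ0), (fun _ => τ0),
    fun _ => zero_le_one, by simp, fun _ => hσ0s, fun _ => hτ0s, by simp⟩
  · have : σ0 ⊗ₖ τ0 = ((((n : ℝ)⁻¹ * (m : ℝ)⁻¹ : ℝ)) : ℂ) • (1 : Matrix (Fin n × Fin m) (Fin n × Fin m) ℂ) := by
      rw [hσ0, hτ0, Matrix.smul_kronecker, Matrix.kronecker_smul, Matrix.one_kronecker_one,
        smul_smul]
      push_cast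
      ring_nf
    rw [this]
    exact psd_smul_real Matrix.PosSemidef.one (by positivity)
  · rw [Matrix.trace_kronecker, hσ0s.2, hτ0s.2, one_mul]

theorem stmt_15 {n m : ℕ} (hn : 1 ≤ n) (hm : 1 ≤ m)
    (ρ : Matrix (Fin n × Fin m) (Fin n × Fin m) ℂ) (hρ : IsState ρ) :
    BSA ρ ≤ 1 - sepDist ρ := by
  obtain ⟨χ, hχs, hχsep⟩ := exists_sepState hn hm
  apply csSup_le
  · exact ⟨0, ⟨le_refl 0, zero_le_one⟩, χ, ρ, hχs, hχsep, hρ, by norm_num⟩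
  · rintro l ⟨⟨hl0, hl1⟩, σ, τ, hσ, hσsep, hτ, heq⟩
    suffices h : sepDist ρ ≤ 1 - l by linarith
    have hρσ : ρ - σ = ((1 - l : ℝ) : ℂ) • (τ - σ) := by
      rw [heq, smul_sub]
      have hcast : ((l : ℝ) : ℂ) = 1 - ((1 - l : ℝ) : ℂ) := by push_cast; ring
      rw [hcast, sub_smul, one_smul]
      abel
    have hTN : traceNorm (ρ - σ) ≤ 2 * (1 - l) := by
      rw [hρσ, traceNorm_smul_real (1 - l) (by linarith)]
      have := traceNorm_state_sub_le hσ hτ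
      nlinarith [traceNorm_nonneg (τ - σ)]
    have hmem : traceNorm (ρ - σ) ∈
        {t | ∃ χ, IsState χ ∧ IsSepState χ ∧ t = traceNorm (ρ - χ)} :=
      ⟨σ, hσ, hσsep, rfl⟩
    have hbdd : BddBelow {t | ∃ χ, IsState χ ∧ IsSepState χ ∧ t = traceNorm (ρ - χ)} := by
      refine ⟨0, fun t ht => ?_⟩
      obtain ⟨χ', _, _, ht⟩ := ht
      rw [ht]
      exact traceNorm_nonneg _
    have hinf := csInf_le hbdd hmem
    rw [sepDist]
    linarith

end
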